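/- (Equivalence of updates (7) and (8).) In the finite tabular setting, let P_D be a transition matrix, r_D : S × A → ℝ a reward vector, π and π̂β policies with π̂β(a|s) > 0 for all s, a, γ ∈ [0,1), α > 0, w : S → ℝ, and e(s,a) := w(s)·(π(a|s) − π̂β(a|s))/π̂β(a|s). If Q, Q' : S × A → ℝ satisfy Q' = r_D + γ·P_D·Aπ·Q − α·e, then the vectors V := AπQ and V' := AπQ' (i.e., V(s) = ∑_a π(a|s)·Q(s,a)) satisfy V' = Aπ(r_D + γ·P_D·V) − α·w·DisCQL, where DisCQL(s) := ∑_a π(a|s)·(π(a|s)/π̂β(a|s) − 1) and the product w·DisCQL is entrywise. -/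

import Mathlib

open Matrix Finset

/-- The activity matrix `Aπ` of a policy `π`: `Aπ s (s', a) = π s a` if `s' = s`, else `0`. -/
def actMat {S A : Type*} [DecidableEq S] (π : S → A → ℝ) : Matrix S (S × A) ℝ :=
  Matrix.of fun s p => if p.1 = s then π s p.2 else 0

/-- The value vector `V^π = (I − γ Aπ P)⁻¹ (Aπ r)`. -/
noncomputable def valVec {S A : Type*} [Fintype S] [Fintype A] [DecidableEq S]
    (γ : ℝ) (P : Matrix (S × A) S ℝ) (r : S × A → ℝ) (π : S → A → ℝ) : S → ℝ :=
  (1 - γ • (actMat π * P))⁻¹.mulVec ((actMat π).mulVec r)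

/-- The discounted occupancy row vector `d^π = ρᵀ (I − γ Aπ P)⁻¹`. -/
noncomputable def occVec {S A : Type*} [Fintype S] [Fintype A] [DecidableEq S]
    (γ : ℝ) (P : Matrix (S × A) S ℝ) (ρ : S → ℝ) (π : S → A → ℝ) : S → ℝ :=
  Matrix.vecMul ρ (1 - γ • (actMat π * P))⁻¹

/-- The normalized discounted occupancy `(1 − γ)·ρᵀ (I − γ Aπ P)⁻¹`. -/
noncomputable def noccVec {S A : Type*} [Fintype S] [Fintype A] [DecidableEq S]
    (γ : ℝ) (P : Matrix (S × A) S ℝ) (ρ : S → ℝ) (π : S → A → ℝ) : S → ℝ :=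
  fun s => (1 - γ) * Matrix.vecMul ρ (1 - γ • (actMat π * P))⁻¹ s

/-- equivalence of updates (7) and (8). If `Q'` is obtained from `Q` by the
SA-CQL Q-update `Q' = r_D + γ P_D Aπ Q − α e` with `e(s,a) = w(s)(π(a|s) − π̂β(a|s))/π̂β(a|s)`,
then the corresponding value functions `V = AπQ`, `V' = AπQ'` satisfy the V-update
`V' = Aπ(r_D + γ P_D V) − α·w·DisCQL`. -/

lemma actMat_mulVec {S A : Type*} [Fintype S] [Fintype A] [DecidableEq S]
    (π : S → A → ℝ) (f : S × A → ℝ) (s : S) :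
    (actMat π).mulVec f s = ∑ a, π s a * f (s, a) := by
  rw [Matrix.mulVec, dotProduct, Fintype.sum_prod_type, Finset.sum_comm]
  simp [actMat]

theorem sa_cql_update_equivalence {S A : Type*} [Fintype S] [Fintype A]
    [Nonempty S] [Nonempty A] [DecidableEq S]
    (PD : Matrix (S × A) S ℝ)
    (hPD0 : ∀ p s, 0 ≤ PD p s) (hPD1 : ∀ p, ∑ s, PD p s = 1)
    (rD : S × A → ℝ)
    (π πβ : S → A → ℝ) (hπ0 : ∀ s a, 0 ≤ π s a) (hπ1 : ∀ s, ∑ a, π s a = 1)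
    (hπβ0 : ∀ s a, 0 < πβ s a) (hπβ1 : ∀ s, ∑ a, πβ s a = 1)
    (γ : ℝ) (hγ0 : 0 ≤ γ) (hγ1 : γ < 1)
    (α : ℝ) (hα : 0 < α) (w : S → ℝ)
    (Q Q' : S × A → ℝ)
    (hQ' : ∀ p : S × A, Q' p = rD p + γ * PD.mulVec ((actMat π).mulVec Q) p
        - α * (w p.1 * (π p.1 p.2 - πβ p.1 p.2) / πβ p.1 p.2)) :
    ∀ s, (actMat π).mulVec Q' s
      = (actMat π).mulVec (fun p => rD p + γ * PD.mulVec ((actMat π).mulVec Q) p) s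
        - α * (w s * ∑ a, π s a * (π s a / πβ s a - 1)) := by
  intro s
  rw [actMat_mulVec, actMat_mulVec]
  simp only [hQ']
  simp only [Finset.mul_sum]
  rw [← Finset.sum_sub_distrib]
  apply Finset.sum_congr rfl
  intro a _
  have h := (hπβ0 s a).ne'
  field_simp
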